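/- There exist constants C, c > 0 depending only on α and C₀ such that for any j ≥ 1 with m_j ≤ n, with probability at least 1 − C exp(−c j²), one has inf_{s ≤ b_j} ( (1/2) c_{m_j} e^{m_j s} |ε_{m_j}| − Σ_{m_j < i ≤ n} |ε_i| c_i e^{i s} ) > 0. -/

import Mathlib

open MeasureTheory ProbabilityTheory Filter
open scoped Classical

noncomputable section

/-- `mseq α j = 2⌊j^(1/α)⌋`, the sequence `m_j` from the construction. -/
def mseq (α : ℝ) (j : ℕ) : ℕ := 2 * ⌊(j : ℝ) ^ (1 / α)⌋₊

/-- The index `j` of the block `I_j = (m_(j-1), m_j]` containing `k`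
(with the convention `m_(-1) = -1`). -/
def blockIdx (α : ℝ) (k : ℕ) : ℕ := sInf {j : ℕ | k ≤ mseq α j}

/-- The deterministic coefficient sequence: `c_k = exp (-2^j)` for `k ∈ I_j`. -/
def cseq (α : ℝ) (k : ℕ) : ℝ := Real.exp (-(2 : ℝ) ^ blockIdx α k)

/-- `j_* = max {j : I_j ∩ {0,…,n} ≠ ∅}`, the index of the block containing `n`. -/
def jStar (α : ℝ) (n : ℕ) : ℕ := blockIdx α n

/-- `β = min {1/2, (1-α)/(2α)}`. -/
def betaC (α : ℝ) : ℝ := min (1 / 2) ((1 - α) / (2 * α))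

/-- `a_j = α j^(1-1/α) 2^(j-2) (1 + j^(-β))`. -/
def aseq (α : ℝ) (j : ℕ) : ℝ :=
  α * (j : ℝ) ^ (1 - 1 / α) * (2 : ℝ) ^ ((j : ℤ) - 2) * (1 + (j : ℝ) ^ (-betaC α))

/-- `b_j = α j^(1-1/α) 2^(j-1) (1 - j^(-β))`. -/
def bseq (α : ℝ) (j : ℕ) : ℝ :=
  α * (j : ℝ) ^ (1 - 1 / α) * (2 : ℝ) ^ ((j : ℤ) - 1) * (1 - (j : ℝ) ^ (-betaC α))

/-- `φ_j(t) = c_(m_j) e^(t m_j)` with `c_(m_j) = exp (-2^j)`. -/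
def phi (α : ℝ) (j : ℕ) (t : ℝ) : ℝ := Real.exp (-(2 : ℝ) ^ j) * Real.exp (t * mseq α j)

/-- `g_n(t) = f_n(e^t) = ∑_{k=0}^n c_k ε_k e^{tk}`. -/
def gval (α : ℝ) {Ω : Type*} (ε : ℕ → Ω → ℝ) (n : ℕ) (ω : Ω) (t : ℝ) : ℝ :=
  ∑ k ∈ Finset.range (n + 1), cseq α k * ε k ω * Real.exp (t * k)

/-- `R_n`: the number of real roots of `f_n(z) = ∑_{k=0}^n c_k ε_k z^k`
(counted without multiplicity). -/
def Rroots (α : ℝ) {Ω : Type*} (ε : ℕ → Ω → ℝ) (n : ℕ) (ω : Ω) : ℕ :=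
  Set.ncard {t : ℝ | ∑ k ∈ Finset.range (n + 1), cseq α k * ε k ω * t ^ k = 0}

/-- `S_n`: the number of sign changes among `(ε_(m_0), …, ε_(m_(j_*-1)), ε_n)`. -/
def Schanges (α : ℝ) {Ω : Type*} (ε : ℕ → Ω → ℝ) (n : ℕ) (ω : Ω) : ℕ :=
  ((Finset.range (jStar α n)).filter fun j =>
    ε (mseq α j) ω * (if j + 1 < jStar α n then ε (mseq α (j + 1)) ω else ε n ω) < 0).card

set_option maxHeartbeats 1000000

-- helper: exp t ≤ 1 + 2t for 0 ≤ t ≤ 1/2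
lemma exp_le_one_add_two_mul {t : ℝ} (h0 : 0 ≤ t) (h1 : t ≤ 1/2) :
    Real.exp t ≤ 1 + 2*t := by
  have h2 : 1 - t ≤ Real.exp (-t) := by have := Real.add_one_le_exp (-t); linarith
  have h3 : Real.exp t = (Real.exp (-t))⁻¹ := by rw [Real.exp_neg, inv_inv]
  have h4 : (0:ℝ) < 1 - t := by linarith
  rw [h3]
  have h5 : (Real.exp (-t))⁻¹ ≤ (1 - t)⁻¹ := by
    apply inv_anti₀ h4 h2
  have h6 : (1 - t)⁻¹ ≤ 1 + 2*t := by
    rw [inv_le_iff_one_le_mul₀ h4]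
    nlinarith
  linarith

lemma one_add_rpow_le_exp {x c : ℝ} (hx : 0 ≤ x) (hc : 0 ≤ c) :
    (1 + x) ^ c ≤ Real.exp (c * x) := by
  calc (1 + x) ^ c ≤ (Real.exp x) ^ c :=
        Real.rpow_le_rpow (by linarith) (by have := Real.add_one_le_exp x; linarith) hc
    _ = Real.exp (c * x) := by rw [← Real.exp_mul, mul_comm]

-- rpow difference bound: b^p - a^p ≤ p b^(p-1) (b-a) for p ≥ 1, 0 ≤ a ≤ b, 0 < b
lemma rpow_sub_rpow_le {a b p : ℝ} (ha : 0 ≤ a) (hab : a ≤ b) (hb : 0 < b) (hp : 1 ≤ p) :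
    b ^ p - a ^ p ≤ p * b ^ (p - 1) * (b - a) := by
  have hs : (-1:ℝ) ≤ a / b - 1 := by
    have : 0 ≤ a / b := by positivity
    linarith
  have hB := one_add_mul_self_le_rpow_one_add hs hp
  have h1 : (1 : ℝ) + (a / b - 1) = a / b := by ring
  rw [h1, Real.div_rpow ha hb.le] at hB
  have hbp : (0:ℝ) < b ^ p := Real.rpow_pos_of_pos hb p
  have key : (a/b - 1) * b ^ p = (a - b) * b ^ (p - 1) := by
    rw [Real.rpow_sub hb, Real.rpow_one]
    field_simp
  have h2 : (1 + p * (a/b - 1)) * b ^ p ≤ a ^ p := by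
    calc (1 + p * (a/b - 1)) * b ^ p ≤ (a ^ p / b ^ p) * b ^ p := by
          exact mul_le_mul_of_nonneg_right hB hbp.le
      _ = a ^ p := by field_simp
  nlinarith [key]

-- eventual: constant ≤ j^q
lemma ev_const_le_rpow (A : ℝ) {q : ℝ} (hq : 0 < q) :
    ∀ᶠ j : ℕ in atTop, A ≤ (j:ℝ) ^ q := by
  exact ((tendsto_rpow_atTop hq).comp tendsto_natCast_atTop_atTop).eventually_ge_atTop A

-- eventual: A * j^p ≤ c * 2^j
lemma ev_poly_le_two_pow (A p : ℝ) {c : ℝ} (hc : 0 < c) :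
    ∀ᶠ j : ℕ in atTop, A * (j:ℝ) ^ p ≤ c * 2 ^ j := by
  have hlog : (0:ℝ) < Real.log 2 := Real.log_pos one_lt_two
  have hM : (0:ℝ) < max A 1 := lt_of_lt_of_le one_pos (le_max_right _ _)
  have h := (isLittleO_rpow_exp_pos_mul_atTop p hlog).bound (show (0:ℝ) < c / max A 1 by positivity)
  have h2 := tendsto_natCast_atTop_atTop (R := ℝ) |>.eventually h
  filter_upwards [h2, eventually_ge_atTop 1] with j hj hj1
  have hj0 : (0:ℝ) ≤ (j:ℝ) := Nat.cast_nonneg j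
  have hnorm : ‖(j:ℝ) ^ p‖ = (j:ℝ) ^ p := Real.norm_of_nonneg (Real.rpow_nonneg hj0 p)
  have hexp : ‖Real.exp (Real.log 2 * (j:ℝ))‖ = (2:ℝ) ^ j := by
    rw [Real.norm_of_nonneg (Real.exp_pos _).le, Real.exp_mul, Real.exp_log two_pos,
      Real.rpow_natCast]
  rw [hnorm, hexp] at hj
  have hA : A * (j:ℝ)^p ≤ max A 1 * (j:ℝ)^p :=
    mul_le_mul_of_nonneg_right (le_max_left _ _) (Real.rpow_nonneg hj0 p)
  calc A * (j:ℝ)^p ≤ max A 1 * (j:ℝ)^p := hA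
    _ ≤ max A 1 * (c / max A 1 * 2 ^ j) := mul_le_mul_of_nonneg_left hj hM.le
    _ = c * 2 ^ j := by field_simp


section Aux
variable {α : ℝ} (hα : α ∈ Set.Ioo (0 : ℝ) 1)
include hα

lemma one_lt_inv_alpha : 1 < 1 / α := (one_lt_one_div hα.1 hα.2)

lemma mseq_mono : Monotone (mseq α) := by
  intro a b hab
  exact Nat.mul_le_mul_left _ (Nat.floor_le_floor
    (Real.rpow_le_rpow (by positivity) (by exact_mod_cast hab) (by have := hα.1; positivity)))

lemma rpow_succ_ge (j : ℕ) : (j : ℝ) ^ (1/α) + 1 ≤ ((j:ℝ) + 1) ^ (1/α) := by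
  have hp : (1:ℝ) ≤ 1 / α := (one_lt_inv_alpha hα).le
  rcases Nat.eq_zero_or_pos j with rfl | hj
  · rw [Nat.cast_zero, Real.zero_rpow (by positivity : (1/α) ≠ 0), zero_add, Real.one_rpow]
  have hj1 : (1:ℝ) ≤ (j:ℝ) := by exact_mod_cast hj
  have hj0 : (0:ℝ) < (j:ℝ) := by linarith
  have hB := one_add_mul_self_le_rpow_one_add
    (s := 1/(j:ℝ)) (by nlinarith [one_div_pos.mpr hj0] : (-1:ℝ) ≤ 1/(j:ℝ)) hp
  have hdiv : ((j:ℝ) + 1) ^ (1/α) = (j:ℝ) ^ (1/α) * (1 + 1/(j:ℝ)) ^ (1/α) := by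
    rw [← Real.mul_rpow hj0.le (by positivity)]
    congr 1
    field_simp
  have hpow1 : (1:ℝ) ≤ (j:ℝ) ^ (1/α - 1) := by
    have := Real.rpow_le_rpow_of_exponent_le hj1 (by linarith : (0:ℝ) ≤ 1/α - 1)
    simpa using this
  have key : (j:ℝ) ^ (1/α) * (1 + (1/α) * (1/(j:ℝ))) ≥ (j:ℝ) ^ (1/α) + 1 := by
    have h1 : (j:ℝ) ^ (1/α) * ((1/α) * (1/(j:ℝ))) = (1/α) * (j:ℝ) ^ (1/α - 1) := by
      rw [Real.rpow_sub hj0, Real.rpow_one]; field_simp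
    have h2 : (1:ℝ) ≤ (1/α) * (j:ℝ) ^ (1/α - 1) := by
      nlinarith
    nlinarith [Real.rpow_nonneg hj0.le (1/α)]
  calc (j : ℝ) ^ (1/α) + 1 ≤ (j:ℝ) ^ (1/α) * (1 + (1/α) * (1/(j:ℝ))) := key
    _ ≤ (j:ℝ) ^ (1/α) * (1 + 1/(j:ℝ)) ^ (1/α) := by
        have := Real.rpow_nonneg hj0.le (1/α)
        nlinarith
    _ = ((j:ℝ) + 1) ^ (1/α) := hdiv.symm

lemma mseq_succ_lt (j : ℕ) : mseq α j < mseq α (j + 1) := by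
  have key := rpow_succ_ge hα j
  have hfl : ⌊(j : ℝ) ^ (1/α)⌋₊ < ⌊((j+1:ℕ) : ℝ) ^ (1/α)⌋₊ := by
    have h1 : (⌊(j : ℝ) ^ (1/α)⌋₊ : ℝ) + 1 ≤ ((j:ℝ) + 1) ^ (1/α) :=
      le_trans (by linarith [Nat.floor_le (Real.rpow_nonneg (Nat.cast_nonneg j) (1/α))]) key
    have := Nat.le_floor (by push_cast; linarith : ((⌊(j : ℝ) ^ (1/α)⌋₊ + 1 : ℕ) : ℝ) ≤ ((j+1:ℕ) : ℝ) ^ (1/α))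
    omega
  simp only [mseq]; omega

lemma mseq_strictMono : StrictMono (mseq α) :=
  strictMono_nat_of_lt_succ (mseq_succ_lt hα)

lemma self_le_mseq (j : ℕ) : j ≤ mseq α j := by
  rcases Nat.eq_zero_or_pos j with rfl | hj
  · simp [mseq]
  have h1 : (j:ℝ) ≤ (j:ℝ) ^ (1/α) := by
    calc (j:ℝ) = (j:ℝ) ^ (1:ℝ) := (Real.rpow_one _).symm
    _ ≤ (j:ℝ) ^ (1/α) := Real.rpow_le_rpow_of_exponent_le (by exact_mod_cast hj) (one_lt_inv_alpha hα).le
  have : j ≤ ⌊(j : ℝ) ^ (1/α)⌋₊ := Nat.le_floor h1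
  calc j ≤ ⌊(j : ℝ) ^ (1/α)⌋₊ := this
  _ ≤ mseq α j := by simp [mseq]; omega

lemma blockIdx_sets_nonempty (k : ℕ) : {j : ℕ | k ≤ mseq α j}.Nonempty :=
  ⟨k, self_le_mseq hα k⟩

lemma le_mseq_blockIdx (k : ℕ) : k ≤ mseq α (blockIdx α k) :=
  Nat.sInf_mem (blockIdx_sets_nonempty hα k)

lemma blockIdx_le {k j : ℕ} (h : k ≤ mseq α j) : blockIdx α k ≤ j :=
  Nat.sInf_le h

lemma lt_blockIdx {k j : ℕ} (h : mseq α j < k) : j < blockIdx α k := by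
  by_contra hcon
  push_neg at hcon
  exact absurd ((le_mseq_blockIdx hα k).trans (mseq_mono hα hcon)) (by omega)

lemma blockIdx_mseq (j : ℕ) : blockIdx α (mseq α j) = j := by
  have h1 : blockIdx α (mseq α j) ≤ j := blockIdx_le hα le_rfl
  rcases Nat.eq_zero_or_pos j with rfl | hj
  · omega
  have h2 : j - 1 < blockIdx α (mseq α j) :=
    lt_blockIdx hα (mseq_strictMono hα (by omega : j - 1 < j))
  omega

lemma cseq_mseq (j : ℕ) : cseq α (mseq α j) = Real.exp (-(2:ℝ) ^ j) := by
  rw [cseq, blockIdx_mseq hα]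

end Aux


section Core
variable {α : ℝ} (hα : α ∈ Set.Ioo (0 : ℝ) 1)
include hα

lemma gamma_pos : 0 < 1/α - 1 := by
  have := one_lt_one_div hα.1 hα.2; linarith

lemma betaC_pos : 0 < betaC α := by
  have h1 : (0:ℝ) < (1 - α) / (2 * α) :=
    div_pos (by linarith [hα.2]) (by linarith [hα.1])
  simp only [betaC, lt_min_iff]
  exact ⟨by norm_num, h1⟩

omit hα in
lemma betaC_le_half : betaC α ≤ 1/2 := min_le_left _ _

lemma betaC_le : betaC α ≤ (1/α - 1)/2 := by
  have hα0 : α ≠ 0 := ne_of_gt hα.1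
  have h1 : 1/α - 1 = (1 - α)/α := by field_simp
  have h : (1 - α) / (2 * α) = (1/α - 1)/2 := by rw [h1]; ring
  calc betaC α ≤ (1 - α) / (2 * α) := min_le_right _ _
  _ = (1/α - 1)/2 := h

omit hα in
lemma jrpow_neg_le_one {j : ℕ} (hj : 1 ≤ j) {q : ℝ} (hq : 0 ≤ q) : (j:ℝ) ^ (-q) ≤ 1 := by
  have hj1 : (1:ℝ) ≤ (j:ℝ) := by exact_mod_cast hj
  calc (j:ℝ) ^ (-q) ≤ (j:ℝ) ^ (0:ℝ) :=
    Real.rpow_le_rpow_of_exponent_le hj1 (by linarith)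
  _ = 1 := Real.rpow_zero _

omit hα in
lemma two_bseq_eq (j : ℕ) :
    2 * bseq α j = α * (j:ℝ) ^ (-(1/α - 1)) * 2 ^ j * (1 - (j:ℝ) ^ (-betaC α)) := by
  have h2 : (2:ℝ) ^ ((j:ℤ) - 1) = 2 ^ j / 2 := by
    rw [zpow_sub₀ (two_ne_zero), zpow_natCast, zpow_one]
  have h3 : (1 - 1/α) = -(1/α - 1) := by ring
  rw [bseq, h2, h3]; ring

lemma bseq_nonneg {j : ℕ} (hj : 1 ≤ j) : 0 ≤ bseq α j := by
  have h1 : (0:ℝ) ≤ 1 - (j:ℝ) ^ (-betaC α) := by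
    linarith [jrpow_neg_le_one hj (betaC_pos hα).le]
  have hα0 := hα.1
  have h4 : (0:ℝ) < (2:ℝ) ^ ((j:ℤ) - 1) := zpow_pos (by norm_num) _
  have h5 : (0:ℝ) ≤ (j:ℝ) ^ (1 - 1/α) := Real.rpow_nonneg (Nat.cast_nonneg _) _
  rw [bseq]; positivity

omit hα in
lemma lin_le_two_pow {d : ℕ} (hd : 2 ≤ d) : (5/4 : ℝ) * d + 3/2 ≤ 2 ^ d := by
  induction d, hd using Nat.le_induction with
  | base => norm_num
  | succ n hn ih =>
    have h2 : (4:ℝ) ≤ 2 ^ n := by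
      calc (4:ℝ) = 2^2 := by norm_num
      _ ≤ 2^n := by exact pow_le_pow_right₀ (by norm_num) hn
    push_cast
    rw [pow_succ]
    push_cast at ih
    linarith

/-- The central deterministic inequality. -/
lemma core_ineq : ∃ j₀ : ℕ, 1 ≤ j₀ ∧ ∀ j, j₀ ≤ j → ∀ J i : ℕ, j + 1 ≤ J → i ≤ mseq α J →
    ((i:ℝ) - mseq α j) * (bseq α j + 1) + 2*(j:ℝ)^2 + 2^j ≤ 2^J := by
  have hα0 := hα.1
  obtain ⟨γ, hγdef⟩ : ∃ x:ℝ, x = 1/α - 1 := ⟨_, rfl⟩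
  have hγ : 0 < γ := by rw [hγdef]; exact gamma_pos hα
  obtain ⟨β, hβdef⟩ : ∃ x:ℝ, x = betaC α := ⟨_, rfl⟩
  have hβ0 : 0 < β := by rw [hβdef]; exact betaC_pos hα
  have hβh : β ≤ 1/2 := by rw [hβdef]; exact betaC_le_half
  have hβγ : β ≤ γ/2 := by rw [hβdef, hγdef]; exact betaC_le hα
  obtain ⟨K, hKdef⟩ : ∃ x:ℝ, x = 8*γ + 1 := ⟨_, rfl⟩
  have hK1 : 1 ≤ K := by rw [hKdef]; linarith
  obtain ⟨B, hBdef⟩ : ∃ x:ℝ, x = 2 * 2^((1:ℝ)/α) + 4 := ⟨_, rfl⟩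
  have hBpos : 0 < B := by rw [hBdef]; positivity
  obtain ⟨A, hAdef⟩ : ∃ x:ℝ, x = (K+1)^γ + 2*(K+1)^((1:ℝ)/α) + 4 := ⟨_, rfl⟩
  obtain ⟨d₁, hd₁⟩ := eventually_atTop.mp (ev_poly_le_two_pow A (1/α) (c := 1) one_pos)
  have E1 := ev_const_le_rpow (8*γ) (show (0:ℝ) < 1 - β by linarith)
  have E2 := ev_const_le_rpow (4*α) (show (0:ℝ) < γ - β by linarith)
  have E3 := ev_poly_le_two_pow B (1/α + 3) (c := 1/2) (by norm_num)
  have E4 := ev_poly_le_two_pow B (1/α + 2) (c := 1/4) (by norm_num)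
  have E6 : ∀ᶠ j : ℕ in atTop, K * d₁ ≤ (j:ℝ) :=
    tendsto_natCast_atTop_atTop.eventually_ge_atTop (K * d₁)
  have E7 : ∀ᶠ j : ℕ in atTop, 2*γ ≤ (j:ℝ) :=
    tendsto_natCast_atTop_atTop.eventually_ge_atTop (2*γ)
  obtain ⟨j₀', hj₀'⟩ := eventually_atTop.mp
    (((((E1.and E2).and E3).and E4).and E6).and E7)
  refine ⟨max j₀' 1, le_max_right _ _, ?_⟩
  intro j hj J i hJ hi
  obtain ⟨⟨⟨⟨⟨e1, e2⟩, e3⟩, e4⟩, e6⟩, e7⟩ := hj₀' j (le_trans (le_max_left _ _) hj)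
  have hj1 : 1 ≤ j := le_trans (le_max_right _ _) hj
  have hj1R : (1:ℝ) ≤ (j:ℝ) := by exact_mod_cast hj1
  have hjR : (0:ℝ) < (j:ℝ) := by linarith
  have hJR : (0:ℝ) < (J:ℝ) := by
    exact_mod_cast Nat.pos_of_ne_zero (by omega)
  have hJjR : (j:ℝ) + 1 ≤ (J:ℝ) := by exact_mod_cast hJ
  have hjJ : (j:ℝ) ≤ (J:ℝ) := by linarith
  have hdR0 : (1:ℝ) ≤ (J:ℝ) - j := by linarith
  obtain ⟨b, hbdef⟩ : ∃ x:ℝ, x = bseq α j := ⟨_, rfl⟩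
  rw [← hbdef]
  have hb0 : 0 ≤ b := by rw [hbdef]; exact bseq_nonneg hα hj1
  have hβj : (0:ℝ) ≤ (j:ℝ)^(-β) := Real.rpow_nonneg hjR.le _
  have hβj1 : (j:ℝ)^(-β) ≤ 1 := jrpow_neg_le_one hj1 hβ0.le
  have h2b : 2 * b = α * (j:ℝ)^(-γ) * 2^j * (1 - (j:ℝ)^(-β)) := by
    rw [hbdef, hγdef, hβdef]; exact two_bseq_eq (α := α) j
  have hT0 : (0:ℝ) < 2^j := by positivity
  have hT1 : (1:ℝ) ≤ 2^j := one_le_pow₀ (by norm_num)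
  -- Step 1
  obtain ⟨Δ, hΔdef⟩ : ∃ x:ℝ, x = (J:ℝ)^((1:ℝ)/α) - (j:ℝ)^((1:ℝ)/α) := ⟨_, rfl⟩
  have hΔ0 : 0 ≤ Δ := by
    rw [hΔdef]; exact sub_nonneg.mpr (Real.rpow_le_rpow hjR.le hjJ (by positivity))
  have hjrp0 : (0:ℝ) ≤ (j:ℝ)^((1:ℝ)/α) := Real.rpow_nonneg hjR.le _
  have hΔJ : Δ ≤ (J:ℝ)^((1:ℝ)/α) := by rw [hΔdef]; linarith
  have hi' : (i:ℝ) ≤ 2 * (J:ℝ)^((1:ℝ)/α) := by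
    have h1 : (i:ℝ) ≤ (mseq α J : ℝ) := by exact_mod_cast hi
    have h2 : ((mseq α J : ℕ):ℝ) = 2 * (⌊(J : ℝ) ^ ((1:ℝ) / α)⌋₊ : ℝ) := by
      simp [mseq]
    have h3 : (⌊(J : ℝ) ^ ((1:ℝ) / α)⌋₊ : ℝ) ≤ (J:ℝ)^((1:ℝ)/α) :=
      Nat.floor_le (Real.rpow_nonneg hJR.le _)
    rw [h2] at h1
    linarith
  have hmj : 2 * ((j:ℝ)^((1:ℝ)/α) - 1) ≤ (mseq α j : ℝ) := by
    have h3 : (j:ℝ)^((1:ℝ)/α) - 1 < (⌊(j : ℝ) ^ ((1:ℝ) / α)⌋₊ : ℝ) :=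
      Nat.sub_one_lt_floor _
    have h2 : ((mseq α j : ℕ):ℝ) = 2 * (⌊(j : ℝ) ^ ((1:ℝ) / α)⌋₊ : ℝ) := by
      simp [mseq]
    rw [h2]
    linarith
  have step1 : (i:ℝ) - mseq α j ≤ 2*Δ + 2 := by
    rw [hΔdef]; linarith
  have hLHS1 : ((i:ℝ) - mseq α j) * (b + 1) ≤ 2*Δ*b + 2*Δ + 2*b + 2 := by
    calc ((i:ℝ) - mseq α j) * (b + 1) ≤ (2*Δ + 2) * (b + 1) :=
      mul_le_mul_of_nonneg_right step1 (by linarith)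
    _ = 2*Δ*b + 2*Δ + 2*b + 2 := by ring
  -- Step 2
  have hΔle : Δ ≤ (1/α) * (J:ℝ)^γ * ((J:ℝ) - j) := by
    have h := rpow_sub_rpow_le (a := (j:ℝ)) (b := (J:ℝ)) (p := 1/α)
      hjR.le hjJ hJR (le_of_lt (one_lt_one_div hα.1 hα.2))
    rw [← hγdef] at h
    rw [hΔdef]
    exact h
  -- Step 3
  have hJjpow : (J:ℝ)^γ * (j:ℝ)^(-γ) = ((J:ℝ)/(j:ℝ))^γ := by
    rw [Real.div_rpow hJR.le hjR.le, Real.rpow_neg hjR.le, div_eq_mul_inv]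
  have hfrac0 : (0:ℝ) ≤ ((J:ℝ)/(j:ℝ))^γ := Real.rpow_nonneg (by positivity) _
  have h2Δb : 2 * Δ * b ≤ ((J:ℝ) - j) * ((J:ℝ)/(j:ℝ))^γ * (1 - (j:ℝ)^(-β)) * 2^j := by
    have h2 : Δ * (2*b) ≤ ((1/α) * (J:ℝ)^γ * ((J:ℝ) - j)) * (2*b) :=
      mul_le_mul_of_nonneg_right hΔle (by linarith)
    have h3 : (1:ℝ)/α * (J:ℝ)^γ * ((J:ℝ) - j) * (α * (j:ℝ)^(-γ) * 2^j * (1 - (j:ℝ)^(-β)))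
        = ((J:ℝ) - j) * ((J:ℝ)^γ * (j:ℝ)^(-γ)) * (1 - (j:ℝ)^(-β)) * 2^j * (α * (1/α)) := by
      ring
    have hαinv : α * (1/α) = 1 := by field_simp
    calc 2 * Δ * b = Δ * (2*b) := by ring
    _ ≤ ((1/α) * (J:ℝ)^γ * ((J:ℝ) - j)) * (2*b) := h2
    _ = ((J:ℝ) - j) * ((J:ℝ)/(j:ℝ))^γ * (1 - (j:ℝ)^(-β)) * 2^j := by
        rw [h2b, h3, hJjpow, hαinv, mul_one]
  -- Step 4
  have h2b' : 2 * b ≤ α * (j:ℝ)^(-γ) * 2^j := by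
    rw [h2b]
    have h1 : (0:ℝ) ≤ α * (j:ℝ)^(-γ) * 2^j := by positivity
    exact mul_le_of_le_one_right h1 (by linarith only [hβj])
  -- c2 : α j^{-γ} ≤ (1/4) j^{-β}
  have hc2 : α * (j:ℝ)^(-γ) ≤ (1/4) * (j:ℝ)^(-β) := by
    have h1 := mul_le_mul_of_nonneg_right e2 (Real.rpow_nonneg hjR.le (-γ))
    rw [← Real.rpow_add hjR] at h1
    have h2 : γ - β + -γ = -β := by ring
    rw [h2] at h1
    linarith
  have hc2T : α * (j:ℝ)^(-γ) * 2^j ≤ (1/4) * ((j:ℝ)^(-β) * 2^j) := by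
    have := mul_le_mul_of_nonneg_right hc2 hT0.le
    calc α * (j:ℝ)^(-γ) * 2^j ≤ (1/4) * (j:ℝ)^(-β) * 2^j := this
    _ = (1/4) * ((j:ℝ)^(-β) * 2^j) := by ring
  have hc2'' : 2*b ≤ (1/4) * 2^j := by
    have h1 : (j:ℝ)^(-β) * 2^j ≤ 1 * 2^j := mul_le_mul_of_nonneg_right hβj1 hT0.le
    have := le_trans h2b' hc2T
    linarith only [this, h1]
  -- poly bound
  have hpoly : 2 * (2*(j:ℝ))^((1:ℝ)/α) + 2 + 2*(j:ℝ)^2 ≤ B * (j:ℝ)^(1/α + 2) := by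
    have hp2 : (1:ℝ) ≤ (j:ℝ)^((1:ℝ)/α + 2) := by
      calc (1:ℝ) = (j:ℝ)^(0:ℝ) := (Real.rpow_zero _).symm
      _ ≤ (j:ℝ)^((1:ℝ)/α + 2) := Real.rpow_le_rpow_of_exponent_le hj1R (by have h := one_div_pos.mpr hα.1; linarith)
    have hp3 : (j:ℝ)^2 ≤ (j:ℝ)^((1:ℝ)/α + 2) := by
      calc (j:ℝ)^2 = (j:ℝ)^((2:ℕ):ℝ) := by rw [Real.rpow_natCast]
      _ ≤ (j:ℝ)^((1:ℝ)/α + 2) := Real.rpow_le_rpow_of_exponent_le hj1R (by push_cast; have h := one_div_pos.mpr hα.1; linarith)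
    have hp4 : (2*(j:ℝ))^((1:ℝ)/α) = 2^((1:ℝ)/α) * (j:ℝ)^((1:ℝ)/α) :=
      Real.mul_rpow (by norm_num) hjR.le
    have hp5 : (j:ℝ)^((1:ℝ)/α) ≤ (j:ℝ)^((1:ℝ)/α + 2) :=
      Real.rpow_le_rpow_of_exponent_le hj1R (by linarith)
    have hp6 : (0:ℝ) ≤ 2^((1:ℝ)/α) := by positivity
    have hp7 : (0:ℝ) ≤ (j:ℝ)^((1:ℝ)/α) := hjrp0
    rw [hp4, hBdef]
    have q1 : 2^((1:ℝ)/α) * (j:ℝ)^((1:ℝ)/α) ≤ 2^((1:ℝ)/α) * (j:ℝ)^((1:ℝ)/α + 2) :=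
      mul_le_mul_of_nonneg_left hp5 hp6
    linarith only [q1, hp2, hp3]
  have he4' : B * (j:ℝ)^((1:ℝ)/α + 2) ≤ (1/4) * 2^j := e4
  -- case split
  rcases eq_or_lt_of_le hJ with hJeq | hJgt
  · -- ***** case d = 1 *****
    have hJval : (J:ℝ) = (j:ℝ) + 1 := by rw [← hJeq]; push_cast; ring
    have hdR1 : (J:ℝ) - j = 1 := by rw [hJval]; ring
    have hdiv : ((J:ℝ)/(j:ℝ)) = 1 + 1/(j:ℝ) := by
      rw [hJval]; field_simp
    have hfrac : ((J:ℝ)/(j:ℝ))^γ ≤ 1 + 2*γ/(j:ℝ) := by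
      rw [hdiv]
      have hx : (0:ℝ) ≤ 1/(j:ℝ) := by positivity
      calc (1 + 1/(j:ℝ))^γ ≤ Real.exp (γ * (1/(j:ℝ))) := one_add_rpow_le_exp hx hγ.le
        _ ≤ 1 + 2*(γ * (1/(j:ℝ))) := by
            apply exp_le_one_add_two_mul (by positivity)
            rw [mul_one_div, div_le_iff₀ hjR]
            linarith
        _ = 1 + 2*γ/(j:ℝ) := by ring
    -- c1
    have hc1 : 2*γ/(j:ℝ) ≤ (1/4) * (j:ℝ)^(-β) := by
      have h1 : (j:ℝ)^(1-β) = (j:ℝ) * (j:ℝ)^(-β) := by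
        have : (1:ℝ) - β = 1 + -β := by ring
        rw [this, Real.rpow_add hjR, Real.rpow_one]
      rw [h1] at e1
      rw [div_le_iff₀ hjR]
      calc 2*γ ≤ (1/4) * ((j:ℝ) * (j:ℝ)^(-β)) := by linarith only [e1]
      _ = (1/4) * (j:ℝ)^(-β) * (j:ℝ) := by ring
    -- c3
    have hc3 : 2*((J:ℝ))^((1:ℝ)/α) + 2 + 2*(j:ℝ)^2 ≤ (1/2) * (j:ℝ)^(-β) * 2^j := by
      have hJ2j : (J:ℝ) ≤ 2*(j:ℝ) := by rw [hJval]; linarith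
      have h1 : ((J:ℝ))^((1:ℝ)/α) ≤ (2*(j:ℝ))^((1:ℝ)/α) :=
        Real.rpow_le_rpow hJR.le hJ2j (by positivity)
      have h2 : B * (j:ℝ)^((1:ℝ)/α + 3) ≤ (1/2) * 2^j := e3
      have h3 : (j:ℝ)^((1:ℝ)/α + 3) = (j:ℝ)^((1:ℝ)/α + 2) * (j:ℝ) := by
        have : (1:ℝ)/α + 3 = (1/α + 2) + 1 := by ring
        rw [this, Real.rpow_add hjR, Real.rpow_one]
      have h5 : (j:ℝ)^(-(1:ℝ)) ≤ (j:ℝ)^(-β) :=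
        Real.rpow_le_rpow_of_exponent_le hj1R (by linarith)
      have h6 : (j:ℝ)^(-(1:ℝ)) = ((j:ℝ))⁻¹ := Real.rpow_neg_one _
      -- B j^{p} ≤ (1/2) 2^j / j ≤ (1/2) j^{-β} 2^j
      have h7 : B * (j:ℝ)^((1:ℝ)/α + 2) ≤ (1/2) * (j:ℝ)^(-β) * 2^j := by
        rw [h3] at h2
        have h8 : B * (j:ℝ)^((1:ℝ)/α + 2) ≤ (1/2) * 2^j * ((j:ℝ))⁻¹ := by
          rw [le_mul_inv_iff₀ hjR]
          calc B * (j:ℝ)^((1:ℝ)/α + 2) * j = B * ((j:ℝ)^((1:ℝ)/α + 2) * j) := by ring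
          _ ≤ (1/2) * 2^j := h2
        have h9 : (1/2) * (j:ℝ)^(-(1:ℝ)) * 2^j ≤ (1/2) * (j:ℝ)^(-β) * 2^j := by
          have := mul_le_mul_of_nonneg_right h5 hT0.le
          linarith only [this]
        calc B * (j:ℝ)^((1:ℝ)/α + 2) ≤ (1/2) * 2^j * ((j:ℝ))⁻¹ := h8
        _ = (1/2) * (j:ℝ)^(-(1:ℝ)) * 2^j := by rw [h6]; ring
        _ ≤ (1/2) * (j:ℝ)^(-β) * 2^j := h9
      linarith only [h1, hpoly, h7]
    -- assemble
    have hg2 : (0:ℝ) ≤ 2*γ/(j:ℝ) := by positivity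
    have hq : ((J:ℝ)/(j:ℝ))^γ * (1 - (j:ℝ)^(-β)) ≤ 1 - (j:ℝ)^(-β) + 2*γ/(j:ℝ) := by
      have q1 : ((J:ℝ)/(j:ℝ))^γ * (1 - (j:ℝ)^(-β)) ≤ (1 + 2*γ/(j:ℝ)) * (1 - (j:ℝ)^(-β)) :=
        mul_le_mul_of_nonneg_right hfrac (by linarith only [hβj1])
      have q2 : (2*γ/(j:ℝ)) * (1 - (j:ℝ)^(-β)) ≤ (2*γ/(j:ℝ)) * 1 :=
        mul_le_mul_of_nonneg_left (by linarith only [hβj]) hg2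
      have q3 : (1 + 2*γ/(j:ℝ)) * (1 - (j:ℝ)^(-β))
          = 1 - (j:ℝ)^(-β) + (2*γ/(j:ℝ)) * (1 - (j:ℝ)^(-β)) := by ring
      linarith only [q1, q2, q3]
    have ht1 : ((J:ℝ) - j) * ((J:ℝ)/(j:ℝ))^γ * (1 - (j:ℝ)^(-β)) * 2^j
        ≤ (1 - (j:ℝ)^(-β)) * 2^j + (2*γ/(j:ℝ)) * 2^j := by
      rw [hdR1, one_mul]
      have q4 := mul_le_mul_of_nonneg_right hq hT0.le
      calc ((J:ℝ)/(j:ℝ))^γ * (1 - (j:ℝ)^(-β)) * 2^j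
          ≤ (1 - (j:ℝ)^(-β) + 2*γ/(j:ℝ)) * 2^j := q4
      _ = (1 - (j:ℝ)^(-β)) * 2^j + (2*γ/(j:ℝ)) * 2^j := by ring
    have hc1' : (2*γ/(j:ℝ)) * 2^j ≤ (1/4) * ((j:ℝ)^(-β) * 2^j) := by
      have := mul_le_mul_of_nonneg_right hc1 hT0.le
      calc (2*γ/(j:ℝ)) * 2^j ≤ (1/4) * (j:ℝ)^(-β) * 2^j := this
      _ = (1/4) * ((j:ℝ)^(-β) * 2^j) := by ring
    have h2J : (2:ℝ)^J = 2 * 2^j := by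
      rw [← hJeq, pow_succ]; ring
    have hΔ2 : 2*Δ ≤ 2*((J:ℝ))^((1:ℝ)/α) := by linarith
    rw [h2J]
    have hfin1 : 2*Δ*b ≤ 2^j - (j:ℝ)^(-β) * 2^j + (1/4) * ((j:ℝ)^(-β) * 2^j) := by
      have q5 : (1 - (j:ℝ)^(-β)) * 2^j = 2^j - (j:ℝ)^(-β) * 2^j := by ring
      linarith only [h2Δb, ht1, hc1', q5]
    have hfin2 : 2*b ≤ (1/4) * ((j:ℝ)^(-β) * 2^j) := le_trans h2b' hc2T
    linarith only [hLHS1, hfin1, hfin2, hΔ2, hc3]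
  · -- ***** case d ≥ 2 *****
    have hd2 : j + 2 ≤ J := hJgt
    have hd2R : (j:ℝ) + 2 ≤ (J:ℝ) := by exact_mod_cast hd2
    obtain ⟨dR, hdRdef⟩ : ∃ x:ℝ, x = (J:ℝ) - j := ⟨_, rfl⟩
    rw [← hdRdef] at h2Δb
    have hdR2 : (2:ℝ) ≤ dR := by rw [hdRdef]; linarith
    have hdRpos : (0:ℝ) < dR := by linarith
    have hdnat : ((J - j : ℕ) : ℝ) = dR := by
      have : j ≤ J := by omega
      push_cast [Nat.cast_sub this]
      rw [hdRdef]
    have h2J : (2:ℝ)^J = 2^j * 2^(J-j) := by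
      rw [← pow_add]
      congr 1
      omega
    by_cases hcase : 8*γ*dR ≤ (j:ℝ) ∧ (J:ℝ) ≤ 2*(j:ℝ)
    · -- subcase (a)
      obtain ⟨hca, hcb⟩ := hcase
      have hdiv : ((J:ℝ)/(j:ℝ)) = 1 + dR/(j:ℝ) := by
        rw [hdRdef]; field_simp; ring
      have hfrac : ((J:ℝ)/(j:ℝ))^γ ≤ 5/4 := by
        rw [hdiv]
        have hx : (0:ℝ) ≤ dR/(j:ℝ) := by positivity
        have hgd : γ * (dR/(j:ℝ)) ≤ 1/8 := by
          rw [← mul_div_assoc, div_le_iff₀ hjR]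
          linarith only [hca]
        calc (1 + dR/(j:ℝ))^γ ≤ Real.exp (γ * (dR/(j:ℝ))) := one_add_rpow_le_exp hx hγ.le
          _ ≤ 1 + 2*(γ * (dR/(j:ℝ))) := exp_le_one_add_two_mul (by positivity) (by linarith)
          _ ≤ 5/4 := by linarith
      have ht1 : 2*Δ*b ≤ (5/4) * dR * 2^j := by
        have q1 : ((J:ℝ)/(j:ℝ))^γ * (1 - (j:ℝ)^(-β)) ≤ 5/4 := by
          have := mul_le_of_le_one_right hfrac0 (by linarith only [hβj] : 1 - (j:ℝ)^(-β) ≤ 1)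
          linarith only [this, hfrac]
        have q2 : dR * (((J:ℝ)/(j:ℝ))^γ * (1 - (j:ℝ)^(-β))) ≤ dR * (5/4) :=
          mul_le_mul_of_nonneg_left q1 (by linarith only [hdRpos])
        have q3 := mul_le_mul_of_nonneg_right q2 hT0.le
        calc 2*Δ*b ≤ dR * ((J:ℝ)/(j:ℝ))^γ * (1 - (j:ℝ)^(-β)) * 2^j := h2Δb
        _ = dR * (((J:ℝ)/(j:ℝ))^γ * (1 - (j:ℝ)^(-β))) * 2^j := by ring
        _ ≤ dR * (5/4) * 2^j := q3
        _ = (5/4) * dR * 2^j := by ring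
      have hc4 : 2*((J:ℝ))^((1:ℝ)/α) + 2 + 2*(j:ℝ)^2 ≤ (1/4) * 2^j := by
        have h1 : ((J:ℝ))^((1:ℝ)/α) ≤ (2*(j:ℝ))^((1:ℝ)/α) :=
          Real.rpow_le_rpow hJR.le hcb (by positivity)
        linarith only [h1, hpoly, he4']
      have hlin : (5/4) * dR + 3/2 ≤ 2^(J-j) := by
        rw [← hdnat]
        exact lin_le_two_pow (by omega)
      have hlin2 : ((5/4) * dR + 3/2) * 2^j ≤ 2^(J-j) * (2:ℝ)^j :=
        mul_le_mul_of_nonneg_right hlin hT0.le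
      rw [h2J]
      have hexp2 : ((5/4) * dR + 3/2) * 2^j = (5/4) * dR * 2^j + (3/2) * 2^j := by ring
      linarith only [hlin2, ht1, hc4, hc2'', hΔJ, hLHS1, hexp2]
    · -- subcase (b)
      have hKexp : K * dR = 8*γ*dR + dR := by rw [hKdef]; ring
      have hjK : (j:ℝ) < K * dR := by
        push_neg at hcase
        have hgd0 : 0 ≤ 8*γ*dR := by positivity
        by_cases h1 : 8*γ*dR ≤ (j:ℝ)
        · have h2 := hcase h1
          have h3 : (j:ℝ) < dR := by rw [hdRdef]; linarith only [h2]
          linarith only [h3, hgd0, hKexp]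
        · push_neg at h1
          linarith only [h1, hdRpos, hKexp]
      have hd₁le : d₁ ≤ J - j := by
        have h1 : K * d₁ < K * dR := lt_of_le_of_lt e6 hjK
        have h2 : (d₁:ℝ) < dR := by
          have hK0 : (0:ℝ) < K := by linarith
          exact lt_of_mul_lt_mul_left h1 hK0.le
        rw [← hdnat] at h2
        exact_mod_cast h2.le
      have hA2 : A * dR^((1:ℝ)/α) ≤ 2^(J-j) := by
        have := hd₁ (J - j) hd₁le
        rw [hdnat] at this
        linarith
      have hJK1 : (J:ℝ) ≤ (K+1) * dR := by
        have h1 : (J:ℝ) = (j:ℝ) + dR := by rw [hdRdef]; ring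
        have h2 : (K+1) * dR = K * dR + dR := by ring
        linarith only [h1, h2, hjK]
      have hKd0 : (0:ℝ) ≤ (K+1) * dR := by positivity
      have hfrac : ((J:ℝ)/(j:ℝ))^γ ≤ ((K+1) * dR)^γ := by
        have h1 : (J:ℝ)/(j:ℝ) ≤ (J:ℝ) := by
          rw [div_le_iff₀ hjR]
          exact le_mul_of_one_le_right hJR.le hj1R
        exact Real.rpow_le_rpow (by positivity) (le_trans h1 hJK1) hγ.le
      have hmulpow : ((K+1) * dR)^γ = (K+1)^γ * dR^γ :=
        Real.mul_rpow (by linarith) hdRpos.le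
      have hdpow : dR * dR^γ = dR^((1:ℝ)/α) := by
        have h1 : dR * dR^γ = dR^(1:ℝ) * dR^γ := by rw [Real.rpow_one]
        rw [h1, ← Real.rpow_add hdRpos]
        congr 1
        rw [hγdef]; ring
      have ht1 : 2*Δ*b ≤ (K+1)^γ * dR^((1:ℝ)/α) * 2^j := by
        have q1 : ((J:ℝ)/(j:ℝ))^γ * (1 - (j:ℝ)^(-β)) ≤ ((K+1) * dR)^γ := by
          have := mul_le_of_le_one_right hfrac0 (by linarith only [hβj] : 1 - (j:ℝ)^(-β) ≤ 1)
          linarith only [this, hfrac]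
        have q2 : dR * (((J:ℝ)/(j:ℝ))^γ * (1 - (j:ℝ)^(-β))) ≤ dR * ((K+1) * dR)^γ :=
          mul_le_mul_of_nonneg_left q1 hdRpos.le
        have q3 := mul_le_mul_of_nonneg_right q2 hT0.le
        calc 2*Δ*b ≤ dR * ((J:ℝ)/(j:ℝ))^γ * (1 - (j:ℝ)^(-β)) * 2^j := h2Δb
        _ = dR * (((J:ℝ)/(j:ℝ))^γ * (1 - (j:ℝ)^(-β))) * 2^j := by ring
        _ ≤ dR * ((K+1) * dR)^γ * 2^j := q3
        _ = (K+1)^γ * (dR * dR^γ) * 2^j := by rw [hmulpow]; ring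
        _ = (K+1)^γ * dR^((1:ℝ)/α) * 2^j := by rw [hdpow]
      have hΔ2 : 2*Δ ≤ 2*(K+1)^((1:ℝ)/α) * dR^((1:ℝ)/α) := by
        have h1 : ((J:ℝ))^((1:ℝ)/α) ≤ ((K+1)*dR)^((1:ℝ)/α) :=
          Real.rpow_le_rpow hJR.le hJK1 (by positivity)
        have h2 : ((K+1)*dR)^((1:ℝ)/α) = (K+1)^((1:ℝ)/α) * dR^((1:ℝ)/α) :=
          Real.mul_rpow (by linarith) hdRpos.le
        rw [h2] at h1
        linarith
      have hc4 : 2 + 2*(j:ℝ)^2 ≤ (1/4) * 2^j := by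
        have h0 : (0:ℝ) ≤ 2 * (2*(j:ℝ))^((1:ℝ)/α) := by positivity
        linarith only [h0, hpoly, he4']
      have hX1 : (1:ℝ) ≤ dR^((1:ℝ)/α) := by
        calc (1:ℝ) = (1:ℝ)^((1:ℝ)/α) := (Real.one_rpow _).symm
        _ ≤ dR^((1:ℝ)/α) := Real.rpow_le_rpow (by norm_num) (by linarith) (by positivity)
      have hKp0 : (0:ℝ) ≤ (K+1)^((1:ℝ)/α) := by positivity
      have hKg0 : (0:ℝ) ≤ (K+1)^γ := by positivity
      rw [h2J]
      have key : A * dR^((1:ℝ)/α) * 2^j ≤ 2^j * 2^(J-j) := by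
        have h := mul_le_mul_of_nonneg_right hA2 hT0.le
        calc A * dR^((1:ℝ)/α) * 2^j ≤ 2^(J-j) * 2^j := h
        _ = 2^j * 2^(J-j) := by ring
      have key2 : (K+1)^γ * dR^((1:ℝ)/α) * 2^j + 2*((K+1)^((1:ℝ)/α) * dR^((1:ℝ)/α) * 2^j)
          + 4*(dR^((1:ℝ)/α) * 2^j) ≤ 2^j * 2^(J-j) := by
        rw [hAdef] at key
        linarith only [key]
      have hX0 : (0:ℝ) ≤ dR^((1:ℝ)/α) := by linarith only [hX1]
      have haux1 : 2*((K+1)^((1:ℝ)/α) * dR^((1:ℝ)/α)) ≤ 2*((K+1)^((1:ℝ)/α) * dR^((1:ℝ)/α) * 2^j) := by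
        have h0 : (0:ℝ) ≤ 2*((K+1)^((1:ℝ)/α) * dR^((1:ℝ)/α)) := by positivity
        have := mul_le_mul_of_nonneg_left hT1 h0
        linarith only [this]
      have haux2 : (3/2) * (2:ℝ)^j ≤ 4*(dR^((1:ℝ)/α) * 2^j) := by
        have := mul_le_mul_of_nonneg_right (by linarith only [hX1] : (3/2:ℝ) ≤ 4*dR^((1:ℝ)/α)) hT0.le
        linarith only [this]
      have hΔ2' : 2*Δ ≤ 2*((K+1)^((1:ℝ)/α) * dR^((1:ℝ)/α)) := by
        linarith only [hΔ2]
      linarith only [hLHS1, ht1, hΔ2', haux1, haux2, hc4, hc2'', key2]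
end Core


lemma geo_sum_le (m n : ℕ) : ∑ i ∈ Finset.Ioc m n, ((1:ℝ)/2)^(i-m) ≤ 1 := by
  have key : ∀ n, ∑ i ∈ Finset.Ioc m n, ((1:ℝ)/2)^(i-m) ≤ 1 - ((1:ℝ)/2)^(n-m) := by
    intro n
    induction n with
    | zero => simp [Finset.Ioc_eq_empty_of_le (Nat.zero_le m)]
      -- Ioc m 0 empty; RHS : 1 - (1/2)^(0-m) = 1 - (1/2)^0 = 0
    | succ n ih =>
      by_cases hmn : m ≤ n
      · rw [Finset.sum_Ioc_succ_top (by omega : m ≤ n)]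
        have h1 : n + 1 - m = (n - m) + 1 := by omega
        have h2 : ((1:ℝ)/2)^(n+1-m) = ((1:ℝ)/2)^(n-m) * (1/2) := by
          rw [h1, pow_succ]
        rw [h2] at *
        have h3 : ((1:ℝ)/2)^(n-m) ≥ 0 := by positivity
        linarith
      · have hempty : Finset.Ioc m (n+1) = ∅ := by
          apply Finset.Ioc_eq_empty_of_le; omega
        rw [hempty]
        have : n + 1 - m = 0 := by omega
        rw [this]
        simp
  have h := key n
  have : (0:ℝ) ≤ ((1:ℝ)/2)^(n-m) := by positivity
  linarith

lemma exp_neg_le_half_pow (k : ℕ) : Real.exp (-(k:ℝ)) ≤ ((1:ℝ)/2)^k := by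
  have h1 : Real.exp (-(k:ℝ)) = Real.exp (-1) ^ k := by
    rw [← Real.exp_nat_mul]
    congr 1
    ring
  have h2 : Real.exp (-1) ≤ 1/2 := by
    have h3 : (2:ℝ) ≤ Real.exp 1 := by
      have := Real.add_one_le_exp 1
      linarith
    rw [Real.exp_neg]
    rw [inv_le_comm₀ (Real.exp_pos 1) (by norm_num)]
    linarith
  rw [h1]
  exact pow_le_pow_left₀ (Real.exp_pos _).le h2 k

theorem core_sum (α : ℝ) (hα : α ∈ Set.Ioo (0 : ℝ) 1) : ∃ j₀ : ℕ, 1 ≤ j₀ ∧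
    ∀ j, j₀ ≤ j → ∀ n, mseq α j ≤ n →
    ∑ i ∈ Finset.Ioc (mseq α j) n, cseq α i * Real.exp ((i:ℝ) * bseq α j)
      ≤ Real.exp (-(2:ℝ)^j) * Real.exp ((mseq α j:ℝ) * bseq α j) * Real.exp (-2*(j:ℝ)^2) := by
  obtain ⟨j₀, hj₀1, hcore⟩ := core_ineq hα
  refine ⟨j₀, hj₀1, ?_⟩
  intro j hj n hmn
  set m : ℕ := mseq α j with hmdef
  set b : ℝ := bseq α j with hbdef
  set D : ℝ := Real.exp (-(2:ℝ)^j) * Real.exp ((m:ℝ)*b) * Real.exp (-2*(j:ℝ)^2) with hDdef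
  have hD0 : 0 ≤ D := by positivity
  have hterm : ∀ i ∈ Finset.Ioc m n,
      cseq α i * Real.exp ((i:ℝ) * b) ≤ D * ((1:ℝ)/2)^(i-m) := by
    intro i hi
    have him : m < i := (Finset.mem_Ioc.mp hi).1
    have himR : (m:ℝ) ≤ (i:ℝ) := by exact_mod_cast him.le
    have hJ1 : j + 1 ≤ blockIdx α i := lt_blockIdx hα him
    have hiJ : i ≤ mseq α (blockIdx α i) := le_mseq_blockIdx hα i
    have hc := hcore j hj (blockIdx α i) i hJ1 hiJ
    have hexp : ((i:ℝ) - m) * (b + 1) = (i:ℝ)*b - (m:ℝ)*b + ((i:ℝ) - m) := by ring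
    have hstepB : (i:ℝ)*b - 2^(blockIdx α i)
        ≤ (m:ℝ)*b - 2^j - 2*(j:ℝ)^2 - ((i:ℝ)-m) := by
      rw [← hmdef] at hc
      linarith only [hc, hexp]
    have hA : cseq α i * Real.exp ((i:ℝ) * b) = Real.exp ((i:ℝ)*b - 2^(blockIdx α i)) := by
      rw [cseq, ← Real.exp_add]
      congr 1
      ring
    have hcast : ((i - m : ℕ):ℝ) = (i:ℝ) - m := by
      rw [Nat.cast_sub him.le]
    have hC : Real.exp ((i:ℝ)*b - 2^(blockIdx α i)) ≤ D * Real.exp (-((i:ℝ)-m)) := by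
      have h1 : D * Real.exp (-((i:ℝ)-m))
          = Real.exp ((m:ℝ)*b - 2^j - 2*(j:ℝ)^2 - ((i:ℝ)-m)) := by
        rw [hDdef]
        simp only [← Real.exp_add]
        congr 1
        ring
      rw [h1]
      exact Real.exp_le_exp.mpr hstepB
    have hD2 : Real.exp (-((i:ℝ)-m)) ≤ ((1:ℝ)/2)^(i-m) := by
      rw [← hcast]
      exact exp_neg_le_half_pow (i - m)
    calc cseq α i * Real.exp ((i:ℝ) * b) = Real.exp ((i:ℝ)*b - 2^(blockIdx α i)) := hA
    _ ≤ D * Real.exp (-((i:ℝ)-m)) := hC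
    _ ≤ D * ((1:ℝ)/2)^(i-m) := mul_le_mul_of_nonneg_left hD2 hD0
  calc ∑ i ∈ Finset.Ioc m n, cseq α i * Real.exp ((i:ℝ) * b)
      ≤ ∑ i ∈ Finset.Ioc m n, D * ((1:ℝ)/2)^(i-m) := Finset.sum_le_sum hterm
  _ = D * ∑ i ∈ Finset.Ioc m n, ((1:ℝ)/2)^(i-m) := by rw [Finset.mul_sum]
  _ ≤ D * 1 := mul_le_mul_of_nonneg_left (geo_sum_le m n) hD0
  _ = D := mul_one D


/-- With probability at least `1 - C exp(-c j²)`: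
`inf_{s ≤ b_j} ((1/2) c_(m_j) e^(m_j s) |ε_(m_j)| - ∑_{m_j < i ≤ n} |ε_i| c_i e^(i s)) > 0`. -/
theorem statement12 (α : ℝ) (hα : α ∈ Set.Ioo (0 : ℝ) 1)
    {Ω : Type*} [MeasurableSpace Ω] (μ : Measure Ω) [IsProbabilityMeasure μ]
    (ε : ℕ → Ω → ℝ) (hmeas : ∀ k, Measurable (ε k))
    (hindep : iIndepFun ε μ)
    (hident : ∀ k, IdentDistrib (ε k) (ε 0) μ μ)
    (hint : ∀ k, Integrable (ε k) μ)
    (hmean : ∀ k, ∫ ω, |ε k ω| ∂μ ≤ 1)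
    (C₀ : ℝ) (hC₀ : 0 < C₀)
    (hanti : ∀ k, ∀ t : ℝ, 0 ≤ t → (μ {ω | |ε k ω| ≤ t}).toReal ≤ C₀ * t) :
    ∃ C > (0 : ℝ), ∃ c > (0 : ℝ), ∀ n j : ℕ, 1 ≤ j → mseq α j ≤ n →
      1 - C * Real.exp (-c * (j : ℝ) ^ 2) ≤
        (μ {ω | ∀ s : ℝ, s ≤ bseq α j →
          0 < cseq α (mseq α j) * Real.exp ((mseq α j : ℝ) * s) * |ε (mseq α j) ω| / 2 -
            ∑ i ∈ Finset.Ioc (mseq α j) n,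
              |ε i ω| * cseq α i * Real.exp ((i : ℝ) * s)}).toReal := by
  obtain ⟨j₀, hj₀1, hsum⟩ := core_sum α hα
  refine ⟨max (1 + 2*C₀) (Real.exp ((j₀:ℝ)^2)), lt_max_of_lt_left (by linarith), 1, one_pos, ?_⟩
  intro n j hj1 hmn
  set C : ℝ := max (1 + 2*C₀) (Real.exp ((j₀:ℝ)^2)) with hCdef
  by_cases hjj : j₀ ≤ j
  · -- main case
    set m : ℕ := mseq α j with hmdef
    set bj : ℝ := bseq α j with hbjdef
    set e : ℝ := Real.exp (-(j:ℝ)^2) with hedef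
    have he0 : 0 < e := Real.exp_pos _
    set t : ℝ := Real.exp (-(2:ℝ)^j) * Real.exp ((m:ℝ)*bj) * e with htdef
    have ht0 : 0 < t := by positivity
    set X : Ω → ℝ := fun ω => ∑ i ∈ Finset.Ioc m n, |ε i ω| * (cseq α i * Real.exp ((i:ℝ)*bj))
      with hXdef
    have hXnonneg : ∀ ω, 0 ≤ X ω := fun ω =>
      Finset.sum_nonneg fun i _ => mul_nonneg (abs_nonneg _) (by simp only [cseq]; positivity)
    have hXmeas : Measurable X :=
      Finset.measurable_sum _ fun i _ => ((hmeas i).abs.mul_const _)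
    have hXint : Integrable X μ :=
      integrable_finset_sum _ fun i _ => ((hint i).abs.mul_const _)
    have hEX : ∫ ω, X ω ∂μ ≤ t * e := by
      have h1 : ∫ ω, X ω ∂μ
          = ∑ i ∈ Finset.Ioc m n, (∫ ω, |ε i ω| ∂μ) * (cseq α i * Real.exp ((i:ℝ)*bj)) := by
        rw [hXdef, integral_finset_sum _ fun i _ => ((hint i).abs.mul_const _)]
        exact Finset.sum_congr rfl fun i _ => integral_mul_const _ _
      have h2 : ∑ i ∈ Finset.Ioc m n, (∫ ω, |ε i ω| ∂μ) * (cseq α i * Real.exp ((i:ℝ)*bj))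
          ≤ ∑ i ∈ Finset.Ioc m n, cseq α i * Real.exp ((i:ℝ)*bj) := by
        apply Finset.sum_le_sum
        intro i _
        have hCi : (0:ℝ) ≤ cseq α i * Real.exp ((i:ℝ)*bj) := by simp only [cseq]; positivity
        have := hmean i
        nlinarith [integral_nonneg (f := fun ω => |ε i ω|) (fun ω => abs_nonneg (ε i ω)) (μ := μ)]
      have h3 := hsum j hjj n hmn
      have h4 : Real.exp (-(2:ℝ)^j) * Real.exp ((m:ℝ)*bj) * Real.exp (-2*(j:ℝ)^2)
          = t * e := by
        rw [htdef, hedef, show (-2*(j:ℝ)^2) = (-(j:ℝ)^2) + (-(j:ℝ)^2) by ring, Real.exp_add]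
        ring
      rw [h1]
      calc _ ≤ _ := h2
      _ ≤ _ := h3
      _ = t * e := h4
    -- Markov
    have hμ1 : (μ {ω | t ≤ X ω}).toReal ≤ e := by
      have hM := mul_meas_ge_le_integral_of_nonneg
        (ae_of_all μ hXnonneg) hXint t
      have h := le_trans hM hEX
      exact le_of_mul_le_mul_left h ht0
    have hμ2 : (μ {ω | |ε m ω| ≤ 2*e}).toReal ≤ 2*C₀*e := by
      have := hanti m (2*e) (by positivity)
      linarith
    set B1 : Set Ω := {ω | t ≤ X ω} with hB1def
    set B2 : Set Ω := {ω | |ε m ω| ≤ 2*e} with hB2def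
    have hB1m : MeasurableSet B1 := measurableSet_le measurable_const hXmeas
    have hB2m : MeasurableSet B2 := measurableSet_le (hmeas m).abs measurable_const
    -- inclusion
    have hGsub : (B1 ∪ B2)ᶜ ⊆ {ω | ∀ s : ℝ, s ≤ bseq α j →
          0 < cseq α (mseq α j) * Real.exp ((mseq α j : ℝ) * s) * |ε (mseq α j) ω| / 2 -
            ∑ i ∈ Finset.Ioc (mseq α j) n,
              |ε i ω| * cseq α i * Real.exp ((i : ℝ) * s)} := by
      intro ω hω
      have hω' : ω ∉ B1 ∪ B2 := hω
      have hω1 : X ω < t := lt_of_not_ge (fun h => hω' (Or.inl h))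
      have hω2 : 2*e < |ε m ω| := lt_of_not_ge (fun h => hω' (Or.inr h))
      intro s hs
      have hterm : ∀ i ∈ Finset.Ioc m n,
          |ε i ω| * cseq α i * Real.exp ((i:ℝ) * s)
          ≤ |ε i ω| * (cseq α i * Real.exp ((i:ℝ)*bj)) * Real.exp ((m:ℝ)*(s - bj)) := by
        intro i hi
        have him : m < i := (Finset.mem_Ioc.mp hi).1
        have himR : (m:ℝ) ≤ (i:ℝ) := by exact_mod_cast him.le
        have hsb : s - bj ≤ 0 := by rw [hbjdef]; linarith
        have hexp : Real.exp ((i:ℝ)*(s - bj)) ≤ Real.exp ((m:ℝ)*(s - bj)) := by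
          apply Real.exp_le_exp.mpr
          apply mul_le_mul_of_nonpos_right himR hsb
        have hid : Real.exp ((i:ℝ) * s) = Real.exp ((i:ℝ)*bj) * Real.exp ((i:ℝ)*(s - bj)) := by
          rw [← Real.exp_add]; congr 1; ring
        calc |ε i ω| * cseq α i * Real.exp ((i:ℝ) * s)
            = |ε i ω| * (cseq α i * Real.exp ((i:ℝ)*bj)) * Real.exp ((i:ℝ)*(s-bj)) := by
              rw [hid]; ring
        _ ≤ |ε i ω| * (cseq α i * Real.exp ((i:ℝ)*bj)) * Real.exp ((m:ℝ)*(s-bj)) := by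
              apply mul_le_mul_of_nonneg_left hexp
              have : (0:ℝ) < cseq α i := Real.exp_pos _
              positivity
      have hS : ∑ i ∈ Finset.Ioc m n, |ε i ω| * cseq α i * Real.exp ((i:ℝ) * s)
          ≤ X ω * Real.exp ((m:ℝ)*(s - bj)) := by
        rw [hXdef, Finset.sum_mul]
        exact Finset.sum_le_sum hterm
      have hXt : X ω * Real.exp ((m:ℝ)*(s - bj)) < t * Real.exp ((m:ℝ)*(s - bj)) :=
        mul_lt_mul_of_pos_right hω1 (Real.exp_pos _)
      have hte : t * Real.exp ((m:ℝ)*(s - bj))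
          = Real.exp (-(2:ℝ)^j) * Real.exp ((m:ℝ)*s) * e := by
        rw [htdef, hedef]
        simp only [← Real.exp_add]
        congr 1
        ring
      have hcs : cseq α (mseq α j) = Real.exp (-(2:ℝ)^j) := cseq_mseq hα j
      have hfin : Real.exp (-(2:ℝ)^j) * Real.exp ((m:ℝ)*s) * e
          < Real.exp (-(2:ℝ)^j) * Real.exp ((m:ℝ)*s) * (|ε m ω| / 2) := by
        apply mul_lt_mul_of_pos_left _ (by positivity)
        linarith
      have hgoal : ∑ i ∈ Finset.Ioc m n, |ε i ω| * cseq α i * Real.exp ((i:ℝ) * s)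
          < cseq α (mseq α j) * Real.exp ((mseq α j : ℝ) * s) * |ε (mseq α j) ω| / 2 := by
        rw [hcs, ← hmdef]
        calc ∑ i ∈ Finset.Ioc m n, |ε i ω| * cseq α i * Real.exp ((i:ℝ) * s)
            ≤ X ω * Real.exp ((m:ℝ)*(s - bj)) := hS
        _ < t * Real.exp ((m:ℝ)*(s - bj)) := hXt
        _ = Real.exp (-(2:ℝ)^j) * Real.exp ((m:ℝ)*s) * e := hte
        _ < Real.exp (-(2:ℝ)^j) * Real.exp ((m:ℝ)*s) * (|ε m ω| / 2) := hfin
        _ = Real.exp (-(2:ℝ)^j) * Real.exp ((m:ℝ)*s) * |ε m ω| / 2 := by ring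
      linarith
    -- measure arithmetic
    have hBum : MeasurableSet (B1 ∪ B2) := hB1m.union hB2m
    have hUb : (μ (B1 ∪ B2)).toReal ≤ e + 2*C₀*e := by
      have h1 : μ (B1 ∪ B2) ≤ μ B1 + μ B2 := measure_union_le _ _
      have h2 : (μ (B1 ∪ B2)).toReal ≤ (μ B1 + μ B2).toReal :=
        ENNReal.toReal_mono (by finiteness) h1
      rw [ENNReal.toReal_add (measure_ne_top _ _) (measure_ne_top _ _)] at h2
      linarith
    have hcompl : (μ (B1 ∪ B2)ᶜ).toReal = 1 - (μ (B1 ∪ B2)).toReal := by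
      rw [prob_compl_eq_one_sub hBum,
        ENNReal.toReal_sub_of_le prob_le_one ENNReal.one_ne_top]
      simp
    have hmono : (μ (B1 ∪ B2)ᶜ).toReal ≤ (μ {ω | ∀ s : ℝ, s ≤ bseq α j →
          0 < cseq α (mseq α j) * Real.exp ((mseq α j : ℝ) * s) * |ε (mseq α j) ω| / 2 -
            ∑ i ∈ Finset.Ioc (mseq α j) n,
              |ε i ω| * cseq α i * Real.exp ((i : ℝ) * s)}).toReal :=
      ENNReal.toReal_mono (measure_ne_top _ _) (measure_mono hGsub)
    have hC1 : 1 + 2*C₀ ≤ C := le_max_left _ _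
    have hee : Real.exp (-(1:ℝ) * (j:ℝ)^2) = e := by rw [hedef]; norm_num
    rw [hee]
    have : 1 - C * e ≤ 1 - (1 + 2*C₀) * e := by nlinarith
    calc 1 - C * e ≤ 1 - (1 + 2*C₀) * e := this
    _ ≤ 1 - (μ (B1 ∪ B2)).toReal := by nlinarith
    _ = (μ (B1 ∪ B2)ᶜ).toReal := hcompl.symm
    _ ≤ _ := hmono
  · -- small j case
    push_neg at hjj
    have h1 : Real.exp ((j₀:ℝ)^2) ≤ C := le_max_right _ _
    have h2 : ((j:ℝ))^2 ≤ ((j₀:ℝ))^2 := by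
      have : (j:ℝ) ≤ (j₀:ℝ) := by exact_mod_cast hjj.le
      have : (0:ℝ) ≤ (j:ℝ) := Nat.cast_nonneg _
      nlinarith
    have h3 : (1:ℝ) ≤ C * Real.exp (-(1:ℝ)*(j:ℝ)^2) := by
      have h4 : Real.exp ((j:ℝ)^2) ≤ Real.exp ((j₀:ℝ)^2) := Real.exp_le_exp.mpr h2
      have h5 : Real.exp ((j:ℝ)^2) * Real.exp (-(1:ℝ)*(j:ℝ)^2) = 1 := by
        rw [← Real.exp_add]; norm_num
      have h6 : Real.exp ((j:ℝ)^2) * Real.exp (-(1:ℝ)*(j:ℝ)^2)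
          ≤ C * Real.exp (-(1:ℝ)*(j:ℝ)^2) :=
        mul_le_mul_of_nonneg_right (le_trans h4 h1) (Real.exp_pos _).le
      linarith
    have := ENNReal.toReal_nonneg (a := μ {ω | ∀ s : ℝ, s ≤ bseq α j →
          0 < cseq α (mseq α j) * Real.exp ((mseq α j : ℝ) * s) * |ε (mseq α j) ω| / 2 -
            ∑ i ∈ Finset.Ioc (mseq α j) n,
              |ε i ω| * cseq α i * Real.exp ((i : ℝ) * s)})
    linarith
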